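/- Suppose in the numbers game on an E-GCM graph there is a looping game: a nonempty legal sequence of node firings from a position λ that returns to λ. If A = 2I - M is nonnegative indecomposable with positive eigenvector ν for eigenvalue ρ(A), then ρ(A) = 2. -/

import Mathlib

/-- Indecomposability (irreducibility) of a square matrix. -/
def Indecomposable {n : ℕ} (A : Matrix (Fin n) (Fin n) ℝ) : Prop :=
  ¬ ∃ S : Set (Fin n), S.Nonempty ∧ Sᶜ.Nonempty ∧ ∀ i ∈ S, ∀ j ∈ Sᶜ, A i j = 0

/-- Firing node `i` from position `lam` in the numbers game on matrix `M`. -/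
def fireR {n : ℕ} (M : Matrix (Fin n) (Fin n) ℝ) (i : Fin n) (lam : Fin n → ℝ) :
    Fin n → ℝ :=
  fun j => lam j - M i j * lam i

/-- Legality of a firing sequence. -/
def legalSeqR {n : ℕ} (M : Matrix (Fin n) (Fin n) ℝ) :
    (Fin n → ℝ) → List (Fin n) → Prop
  | _, [] => True
  | lam, i :: s => 0 < lam i ∧ legalSeqR M (fireR M i lam) s

/-- Resulting position of a firing sequence. -/
def playSeqR {n : ℕ} (M : Matrix (Fin n) (Fin n) ℝ) :
    (Fin n → ℝ) → List (Fin n) → (Fin n → ℝ)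
  | lam, [] => lam
  | lam, i :: s => playSeqR M (fireR M i lam) s

/-- If there is a looping game on the numbers game for `M` (a nonempty legal firing
sequence from `lam` returning to `lam`), and `A = 2I - M` is nonnegative and
indecomposable with a positive eigenvector `ν` for the eigenvalue `ρ = ρ(A)`,
then `ρ = 2`. -/
theorem stmt6 {n : ℕ} (M A : Matrix (Fin n) (Fin n) ℝ)
    (hA : A = 2 • (1 : Matrix (Fin n) (Fin n) ℝ) - M)
    (hnn : ∀ i j, 0 ≤ A i j) (hind : Indecomposable A)
    (ρ : ℝ) (ν : Fin n → ℝ) (hν : ∀ i, 0 < ν i) (heig : A.mulVec ν = ρ • ν)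
    (lam : Fin n → ℝ) (s : List (Fin n)) (hne : s ≠ [])
    (hleg : legalSeqR M lam s) (hloop : playSeqR M lam s = lam) :
    ρ = 2 := by
  classical
  by_contra hρ
  -- row sums of M against ν
  have hMν : ∀ i, ∑ j, M i j * ν j = (2 - ρ) * ν i := by
    intro i
    have h1 : ∑ j, A i j * ν j = ρ * ν i := by
      have := congrFun heig i
      simpa [Matrix.mulVec, dotProduct, Pi.smul_apply, smul_eq_mul] using this
    have hM : ∀ j, M i j = 2 * (if i = j then 1 else 0) - A i j := by
      intro j
      have := congrFun (congrFun hA i) j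
      simp only [Matrix.sub_apply, Matrix.smul_apply, Matrix.one_apply, smul_ite,
        smul_zero] at this
      rw [this]
      norm_num
    calc ∑ j, M i j * ν j
        = ∑ j, ((2 * (if i = j then 1 else 0)) * ν j - A i j * ν j) := by
          apply Finset.sum_congr rfl; intro j _; rw [hM j]; ring
      _ = (∑ j, (2 * (if i = j then 1 else 0)) * ν j) - ∑ j, A i j * ν j :=
          Finset.sum_sub_distrib _ _
      _ = 2 * ν i - ρ * ν i := by
          rw [h1]; congr 1
          simp [Finset.sum_ite_eq, mul_assoc]
      _ = (2 - ρ) * ν i := by ring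
  -- energy function
  set E : (Fin n → ℝ) → ℝ := fun z => (2 - ρ) * ∑ j, z j * ν j with hE
  have step : ∀ (i : Fin n) (μ : Fin n → ℝ),
      E (fireR M i μ) = E μ - (2 - ρ)^2 * (μ i * ν i) := by
    intro i μ
    have : ∑ j, fireR M i μ j * ν j
        = (∑ j, μ j * ν j) - (2 - ρ) * (μ i * ν i) := by
      calc ∑ j, fireR M i μ j * ν j
          = (∑ j, μ j * ν j) - ∑ j, M i j * μ i * ν j := by
            simp only [fireR, sub_mul]
            rw [Finset.sum_sub_distrib]
        _ = (∑ j, μ j * ν j) - μ i * ∑ j, M i j * ν j := by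
            congr 1
            rw [Finset.mul_sum]
            apply Finset.sum_congr rfl; intro j _; ring
        _ = (∑ j, μ j * ν j) - (2 - ρ) * (μ i * ν i) := by
            rw [hMν i]; ring
    simp only [hE, this]; ring
  -- monotonicity along a legal sequence
  have mono : ∀ (t : List (Fin n)) (μ : Fin n → ℝ),
      legalSeqR M μ t → E (playSeqR M μ t) ≤ E μ := by
    intro t
    induction t with
    | nil => intro μ _; simp [playSeqR]
    | cons i t ih =>
      intro μ hleg
      obtain ⟨hpos, hleg'⟩ := hleg
      have h1 : E (playSeqR M (fireR M i μ) t) ≤ E (fireR M i μ) := ih _ hleg'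
      have h2 : E (fireR M i μ) ≤ E μ := by
        rw [step]
        have : 0 ≤ (2 - ρ)^2 * (μ i * ν i) :=
          mul_nonneg (sq_nonneg _) (le_of_lt (mul_pos hpos (hν i)))
        linarith
      calc E (playSeqR M μ (i :: t)) = E (playSeqR M (fireR M i μ) t) := rfl
        _ ≤ E μ := le_trans h1 h2
  -- first step is strictly decreasing
  obtain ⟨i, t, rfl⟩ : ∃ i t, s = i :: t := by
    cases s with
    | nil => exact absurd rfl hne
    | cons i t => exact ⟨i, t, rfl⟩
  obtain ⟨hpos, hleg'⟩ := hleg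
  have hsq : 0 < (2 - ρ)^2 := by
    have : 2 - ρ ≠ 0 := fun h => hρ (by linarith)
    positivity
  have hstrict : E (fireR M i lam) < E lam := by
    rw [step]
    have : 0 < (2 - ρ)^2 * (lam i * ν i) := mul_pos hsq (mul_pos hpos (hν i))
    linarith
  have hfinal : E (playSeqR M lam (i :: t)) < E lam :=
    lt_of_le_of_lt (mono t _ hleg') hstrict
  rw [hloop] at hfinal
  exact lt_irrefl _ hfinal
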